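/- In the proof of the agreeable linear society theorem: let X be a closed subset of ℝ and let V be a finite set of voters with nonempty approval sets A_v = X ∩ I_v, where each I_v is a closed bounded interval; write L_v = min A_v, R_v = max A_v, x = max_v L_v achieved by voter i, and y = min_v R_v achieved by voter j. If x > y and among every three voters some two have intersecting approval sets, then for every voter v the approval set A_v contains x or y; consequently one of the two platforms x, y lies in at least half of the approval sets. -/

import Mathlib

/-- A step in the proof of the agreeable linear society theorem: in an agreeable
linear society with nonempty compact approval sets, writing `L v = min (A v)`,
`R v = max (A v)`, `x = max_v L v` (achieved by voter `i`) and `y = min_v R v`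
(achieved by voter `j`), if `x > y` then every approval set contains `x` or `y`;
consequently one of the platforms `x`, `y` lies in at least half of the approval
sets. -/
theorem agreeable_proof_step
    {ι : Type*} (X : Set ℝ) (hX : IsClosed X)
    (V : Finset ι) (hV : V.Nonempty)
    (A : ι → Set ℝ)
    (hA : ∀ v ∈ V, ∃ a b : ℝ, a ≤ b ∧ A v = X ∩ Set.Icc a b)
    (hne : ∀ v ∈ V, (A v).Nonempty)
    (i : ι) (hi : i ∈ V) (j : ι) (hj : j ∈ V) (x y : ℝ)
    (hx : x = sInf (A i)) (hxmax : ∀ v ∈ V, sInf (A v) ≤ x)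
    (hy : y = sSup (A j)) (hymin : ∀ v ∈ V, y ≤ sSup (A v))
    (hyx : y < x)
    (hagree : ∀ u ∈ V, ∀ v ∈ V, ∀ w ∈ V, u ≠ v → u ≠ w → v ≠ w →
      (A u ∩ A v).Nonempty ∨ (A u ∩ A w).Nonempty ∨ (A v ∩ A w).Nonempty) :
    (∀ v ∈ V, x ∈ A v ∨ y ∈ A v) ∧
      (V.card ≤ 2 * {v ∈ (V : Set ι) | x ∈ A v}.ncard ∨
        V.card ≤ 2 * {v ∈ (V : Set ι) | y ∈ A v}.ncard) := by
  -- compactness of approval sets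
  have hcomp : ∀ v ∈ V, IsCompact (A v) := by
    intro v hv
    obtain ⟨a, b, -, hab⟩ := hA v hv
    rw [hab]
    exact (isCompact_Icc).inter_left hX
  have hbddB : ∀ v ∈ V, BddBelow (A v) := fun v hv => (hcomp v hv).bddBelow
  have hbddA : ∀ v ∈ V, BddAbove (A v) := fun v hv => (hcomp v hv).bddAbove
  have hxAi : x ∈ A i := hx ▸ (hcomp i hi).sInf_mem (hne i hi)
  have hyAj : y ∈ A j := hy ▸ (hcomp j hj).sSup_mem (hne j hj)
  have hij : i ≠ j := by
    rintro rfl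
    have hxy : x ≤ y := by
      rw [hx, hy]
      exact csInf_le_csSup (hne i hi) (hbddB i hi) (hbddA i hi)
    linarith
  -- A i and A j are disjoint
  have hdisj : ¬ (A i ∩ A j).Nonempty := by
    rintro ⟨p, hpi, hpj⟩
    have h1 : x ≤ p := hx ▸ csInf_le (hbddB i hi) hpi
    have h2 : p ≤ y := hy ▸ le_csSup (hbddA j hj) hpj
    linarith
  have main : ∀ v ∈ V, x ∈ A v ∨ y ∈ A v := by
    intro v hv
    by_cases hvi : v = i
    · exact Or.inl (hvi ▸ hxAi)
    by_cases hvj : v = j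
    · exact Or.inr (hvj ▸ hyAj)
    have h := hagree v hv i hi j hj hvi hvj hij
    obtain ⟨a, b, -, hab⟩ := hA v hv
    rcases h with ⟨p, hpv, hpi⟩ | ⟨p, hpv, hpj⟩ | h
    · left
      have hpb : p ≤ b := (hab ▸ hpv).2.2
      have hxp : x ≤ p := hx ▸ csInf_le (hbddB i hi) hpi
      have hax : a ≤ x := by
        have h1 : a ≤ sInf (A v) := le_csInf (hne v hv) (fun z hz => (hab ▸ hz).2.1)
        exact h1.trans (hxmax v hv)
      rw [hab]
      obtain ⟨a', b', -, hab'⟩ := hA i hi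
      exact ⟨(hab' ▸ hxAi).1, hax, hxp.trans hpb⟩
    · right
      have hap : a ≤ p := (hab ▸ hpv).2.1
      have hpy : p ≤ y := hy ▸ le_csSup (hbddA j hj) hpj
      have hyb : y ≤ b := by
        have h1 : sSup (A v) ≤ b := csSup_le (hne v hv) (fun z hz => (hab ▸ hz).2.2)
        exact (hymin v hv).trans h1
      rw [hab]
      refine ⟨?_, hap.trans hpy, hyb⟩
      obtain ⟨a', b', -, hab'⟩ := hA j hj
      exact (hab' ▸ hyAj).1
    · exact absurd h hdisj
  refine ⟨main, ?_⟩
  set Sx : Set ι := {v ∈ (V : Set ι) | x ∈ A v} with hSx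
  set Sy : Set ι := {v ∈ (V : Set ι) | y ∈ A v} with hSy
  have hfin : (V : Set ι).Finite := V.finite_toSet
  have hsub : (V : Set ι) ⊆ Sx ∪ Sy := by
    intro v hv
    rcases main v hv with h | h
    · exact Or.inl ⟨hv, h⟩
    · exact Or.inr ⟨hv, h⟩
  have hcard : V.card ≤ Sx.ncard + Sy.ncard := by
    calc V.card = (V : Set ι).ncard := (Set.ncard_coe_finset V).symm
    _ ≤ (Sx ∪ Sy).ncard := Set.ncard_le_ncard hsub ((hfin.subset (fun v hv => hv.1)).union (hfin.subset (fun v hv => hv.1)))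
    _ ≤ Sx.ncard + Sy.ncard := Set.ncard_union_le Sx Sy
  rcases le_total Sx.ncard Sy.ncard with h | h
  · right; omega
  · left; omega
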